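/- For every n ∈ ℕ there is a constant C > 0 with the following property. Let m_k, m_ℓ > 0 and let p_k, p_ℓ ∈ ℝ³ with |p_k − p_ℓ| ≥ 5, and define Θ : ℝ³ \ {p_ℓ} → ℝ by Θ(x) = (m_ℓ/|x − p_ℓ|) · (|x − p_k|/(m_k + 2|x − p_k|)). Then for every x with 1 ≤ |x − p_k| ≤ 2 and every j ≤ n, the j-th iterated Fréchet derivative of Θ at x has operator norm at most C·m_ℓ/|p_k − p_ℓ|. -/

import Mathlib

open scoped BigOperators
open Set Finset

set_option maxHeartbeats 1600000

private lemma aux_prod_abs_le_factorial {p : ℝ} (hp : ∀ k : ℕ, |p - k| ≤ k + 1) (i : ℕ) :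
    |∏ k ∈ Finset.range i, (p - k)| ≤ (i.factorial : ℝ) := by
  rw [Finset.abs_prod]
  calc ∏ k ∈ Finset.range i, |p - (k:ℝ)| ≤ ∏ k ∈ Finset.range i, ((k:ℝ) + 1) :=
        Finset.prod_le_prod (fun k _ => abs_nonneg _) (fun k _ => hp k)
    _ = (i.factorial : ℝ) := by
        rw [← Finset.prod_range_add_one_eq_factorial i]
        push_cast
        rfl

private lemma aux_iter_deriv_rpow (c d p : ℝ) : ∀ (i : ℕ) (s : ℝ), 0 < s →
    iteratedDeriv (i + 1) (fun t : ℝ => c + d * t ^ p) s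
      = d * (∏ k ∈ Finset.range (i + 1), (p - k)) * s ^ (p - (i + 1)) := by
  intro i
  induction i with
  | zero =>
      intro s hs
      rw [iteratedDeriv_one]
      have h := ((Real.hasDerivAt_rpow_const (p := p) (Or.inl hs.ne')).const_mul d).const_add c
      rw [h.deriv]
      rw [Finset.prod_range_one]
      push_cast
      ring
  | succ i IH =>
      intro s hs
      rw [iteratedDeriv_succ]
      have hev : iteratedDeriv (i+1) (fun t : ℝ => c + d * t ^ p)
          =ᶠ[nhds s] fun t => (d * (∏ k ∈ Finset.range (i + 1), (p - k))) * t ^ (p - (i+1)) := by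
        filter_upwards [isOpen_Ioi.mem_nhds (show s ∈ Set.Ioi (0:ℝ) from hs)] with t ht
        rw [IH t ht]
      rw [hev.deriv_eq]
      have h := (Real.hasDerivAt_rpow_const (p := p - (i+1)) (Or.inl hs.ne')).const_mul
        (d * (∏ k ∈ Finset.range (i + 1), (p - k)))
      rw [h.deriv, Finset.prod_range_succ (fun k => (p - (k:ℝ))) (i+1)]
      have he : p - (↑i + 1) - 1 = p - (↑(i + 1) + 1) := by push_cast; ring
      rw [he]
      push_cast
      ring

noncomputable section

local notation "E" => EuclideanSpace ℝ (Fin 3)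

private def TT : E →L[ℝ] E →L[ℝ] ℝ :=
  LinearMap.mkContinuous₂
    (LinearMap.mk₂ ℝ (fun v w : E => 2 * (inner ℝ v w : ℝ))
      (fun a b w => by simp only [inner_add_left]; ring)
      (fun c a w => by simp only [real_inner_smul_left, smul_eq_mul]; ring)
      (fun v a b => by simp only [inner_add_right]; ring)
      (fun c v w => by simp only [real_inner_smul_right, smul_eq_mul]; ring))
    2 (fun v w => by
      simp only [LinearMap.mk₂_apply, Real.norm_eq_abs, abs_mul, abs_two]
      have := abs_real_inner_le_norm v w
      nlinarith [abs_nonneg (inner ℝ v w : ℝ), norm_nonneg v, norm_nonneg w])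

private lemma TT_apply (v w : E) : TT v w = 2 * (inner ℝ v w : ℝ) := rfl

private lemma normsq_hasFDerivAt (p x : E) :
    HasFDerivAt (fun y : E => ‖y - p‖ ^ 2) (TT (x - p)) x := by
  have h : HasFDerivAt (fun y : E => y - p) (ContinuousLinearMap.id ℝ E) x :=
    (hasFDerivAt_id x).sub_const p
  have h2 := h.norm_sq
  refine h2.congr_fderiv ?_
  ext v
  simp [TT_apply, two_smul, real_inner_comm]
  ring

private lemma normsq_fderiv (p : E) :
    fderiv ℝ (fun y : E => ‖y - p‖ ^ 2) = fun y => TT (y - p) := by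
  funext y
  exact (normsq_hasFDerivAt p y).fderiv

private lemma TT_norm_le : ‖TT‖ ≤ 2 :=
  LinearMap.mkContinuous₂_norm_le _ (by norm_num) _

private lemma TT_apply_norm_le (v : E) : ‖TT v‖ ≤ 2 * ‖v‖ := by
  refine ContinuousLinearMap.opNorm_le_bound _ (by positivity) (fun w => ?_)
  rw [TT_apply, Real.norm_eq_abs, abs_mul, abs_two]
  have := abs_real_inner_le_norm v w
  nlinarith [abs_nonneg (inner ℝ v w : ℝ), norm_nonneg v, norm_nonneg w]

private lemma affine_fderiv (p : E) :
    fderiv ℝ (fun y : E => TT (y - p)) = fun _ => TT := by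
  funext y
  have heq : (fun y : E => TT (y - p)) = fun y : E => TT y - TT p := by
    funext z; rw [map_sub]
  rw [heq]
  exact (TT.hasFDerivAt.sub_const (TT p)).fderiv

private lemma normsq_D1 (p x : E) :
    ‖iteratedFDeriv ℝ 1 (fun y : E => ‖y - p‖ ^ 2) x‖ ≤ 2 * ‖x - p‖ := by
  rw [← norm_iteratedFDeriv_fderiv, norm_iteratedFDeriv_zero,
    (normsq_hasFDerivAt p x).fderiv]
  exact TT_apply_norm_le _

private lemma normsq_D2 (p x : E) :
    ‖iteratedFDeriv ℝ 2 (fun y : E => ‖y - p‖ ^ 2) x‖ ≤ 2 := by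
  rw [show (2:ℕ) = 1 + 1 from rfl, ← norm_iteratedFDeriv_fderiv, normsq_fderiv,
    ← norm_iteratedFDeriv_fderiv, norm_iteratedFDeriv_zero, affine_fderiv]
  exact TT_norm_le

private lemma normsq_D3 (p x : E) (m : ℕ) :
    ‖iteratedFDeriv ℝ (m + 3) (fun y : E => ‖y - p‖ ^ 2) x‖ = 0 := by
  rw [show m + 3 = (m + 2) + 1 from rfl, ← norm_iteratedFDeriv_fderiv, normsq_fderiv,
    show m + 2 = (m + 1) + 1 from rfl, ← norm_iteratedFDeriv_fderiv, affine_fderiv,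
    iteratedFDeriv_const_of_ne (Nat.succ_ne_zero m)]
  simp

private lemma normsq_contDiff (p : E) {N : WithTop ℕ∞} :
    ContDiff ℝ N (fun y : E => ‖y - p‖ ^ 2) := by
  exact (contDiff_id.sub contDiff_const).norm_sq ℝ

private lemma sq_rpow_half {r : ℝ} (hr : 0 ≤ r) : (r ^ 2 : ℝ) ^ ((1:ℝ)/2) = r := by
  rw [← Real.rpow_natCast r 2, ← Real.rpow_mul hr]
  norm_num

private lemma scaled_normsq_bound (p x : E) (h3 : 3 ≤ ‖x - p‖) :
    ∀ m, 1 ≤ m → ‖iteratedFDeriv ℝ m (fun y : E => (‖x - p‖ ^ 2)⁻¹ * ‖y - p‖ ^ 2) x‖ ≤ 1 := by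
  intro m hm
  have ht0 : (0:ℝ) < ‖x - p‖ := by linarith
  have hsmul : (fun y : E => (‖x - p‖ ^ 2)⁻¹ * ‖y - p‖ ^ 2)
      = fun y : E => (‖x - p‖ ^ 2)⁻¹ • ‖y - p‖ ^ 2 := by
    funext y; rw [smul_eq_mul]
  rw [hsmul, iteratedFDeriv_const_smul_apply' (normsq_contDiff p).contDiffAt, norm_smul,
    Real.norm_eq_abs, abs_inv, abs_of_pos (by positivity)]
  match m, hm with
  | 1, _ =>
    have := normsq_D1 p x
    calc (‖x - p‖^2)⁻¹ * ‖iteratedFDeriv ℝ 1 (fun y : E => ‖y - p‖ ^ 2) x‖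
        ≤ (‖x - p‖^2)⁻¹ * (2 * ‖x - p‖) := by
          apply mul_le_mul_of_nonneg_left this (by positivity)
      _ ≤ 1 := by
          rw [inv_mul_le_iff₀ (by positivity)]
          nlinarith
  | 2, _ =>
    calc (‖x - p‖^2)⁻¹ * ‖iteratedFDeriv ℝ 2 (fun y : E => ‖y - p‖ ^ 2) x‖
        ≤ (‖x - p‖^2)⁻¹ * 2 := mul_le_mul_of_nonneg_left (normsq_D2 p x) (by positivity)
      _ ≤ 1 := by
          rw [inv_mul_le_iff₀ (by positivity)]
          nlinarith
  | (m+3), _ =>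
    rw [normsq_D3 p x m]
    simp

private lemma bound_A (n : ℕ) {ml : ℝ} (hml : 0 < ml) (pl x : E) (h3 : 3 ≤ ‖x - pl‖)
    {U : Set E} (hU : IsOpen U) (hxU : x ∈ U)
    (hUp : ∀ y ∈ U, ‖x - pl‖ / 2 < ‖y - pl‖) (i : ℕ) (hi : i ≤ n) :
    ‖iteratedFDerivWithin ℝ i (fun y : E => ml * ‖y - pl‖⁻¹) U x‖
      ≤ (n.factorial : ℝ) * n.factorial * (ml / ‖x - pl‖) := by
  have ht0 : (0:ℝ) < ‖x - pl‖ := by linarith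
  set t : ℝ := ‖x - pl‖ with ht
  set f1 : E → ℝ := fun y => (t ^ 2)⁻¹ * ‖y - pl‖ ^ 2 with hf1
  set g1 : ℝ → ℝ := fun s => (ml / t) * s ^ (-((1:ℝ)/2)) with hg1
  have hEq : Set.EqOn (fun y : E => ml * ‖y - pl‖⁻¹) (g1 ∘ f1) U := by
    intro y hy
    have hc : 0 < ‖y - pl‖ := lt_trans (by positivity) (hUp y hy)
    simp only [g1, f1, Function.comp_apply]
    have h1 : (t ^ 2)⁻¹ * ‖y - pl‖ ^ 2 = (‖y - pl‖ / t) ^ 2 := by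
      field_simp
    rw [h1, Real.rpow_neg (by positivity), sq_rpow_half (by positivity)]
    field_simp
  rw [iteratedFDerivWithin_congr hEq hxU]
  have hf1x : f1 x = 1 := by
    simp only [f1]
    field_simp
    rw [ht]
  have hg1cd : ContDiffOn ℝ (n : WithTop ℕ∞) g1 (Set.Ioi (0:ℝ)) := fun s hs =>
    (contDiffAt_const.mul (Real.contDiffAt_rpow_const_of_ne (ne_of_gt hs))).contDiffWithinAt
  have hf1cd : ContDiffOn ℝ (n : WithTop ℕ∞) f1 U :=
    (contDiff_const.mul (normsq_contDiff pl)).contDiffOn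
  have hmaps : Set.MapsTo f1 U (Set.Ioi (0:ℝ)) := by
    intro y hy
    have hc : 0 < ‖y - pl‖ := lt_trans (by positivity) (hUp y hy)
    simp only [f1, Set.mem_Ioi]
    positivity
  have hC : ∀ k, k ≤ i → ‖iteratedFDerivWithin ℝ k g1 (Set.Ioi 0) (f1 x)‖
      ≤ ml / t * n.factorial := by
    intro k hk
    rw [hf1x, iteratedFDerivWithin_of_isOpen k isOpen_Ioi (show (1:ℝ) ∈ Set.Ioi 0 by norm_num),
      norm_iteratedFDeriv_eq_norm_iteratedDeriv]
    have hfac1 : (1:ℝ) ≤ n.factorial := by exact_mod_cast Nat.one_le_iff_ne_zero.mpr n.factorial_ne_zero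
    match k with
    | 0 =>
      rw [iteratedDeriv_zero]
      simp only [g1, Real.one_rpow, mul_one, Real.norm_eq_abs, abs_of_pos (div_pos hml ht0)]
      nlinarith [div_pos hml ht0]
    | (m+1) =>
      have hshape : g1 = fun s : ℝ => 0 + (ml/t) * s ^ (-((1:ℝ)/2)) := by
        funext s; simp [g1]
      rw [hshape, aux_iter_deriv_rpow 0 (ml/t) (-((1:ℝ)/2)) m 1 one_pos, Real.one_rpow,
        mul_one, Real.norm_eq_abs, abs_mul, abs_of_pos (div_pos hml ht0)]
      have hprod : |∏ k ∈ Finset.range (m+1), (-((1:ℝ)/2) - k)| ≤ ((m+1).factorial : ℝ) := by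
        apply aux_prod_abs_le_factorial
        intro k
        rw [abs_le]
        constructor <;> [skip; skip] <;> push_cast <;> nlinarith [Nat.cast_nonneg (α := ℝ) k]
      have hfle : ((m+1).factorial : ℝ) ≤ (n.factorial : ℝ) := by
        exact_mod_cast Nat.factorial_le (hk.trans hi)
      have h0 : 0 < ml / t := div_pos hml ht0
      nlinarith [abs_nonneg (∏ k ∈ Finset.range (m+1), (-((1:ℝ)/2) - (k:ℝ)))]
  have hD : ∀ k, 1 ≤ k → k ≤ i → ‖iteratedFDerivWithin ℝ k f1 U x‖ ≤ (1:ℝ) ^ k := by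
    intro k h1k _
    rw [iteratedFDerivWithin_of_isOpen k hU hxU, one_pow]
    exact scaled_normsq_bound pl x h3 k h1k
  have hcomp := norm_iteratedFDerivWithin_comp_le hg1cd hf1cd
    (by exact_mod_cast hi) isOpen_Ioi.uniqueDiffOn hU.uniqueDiffOn hmaps hxU hC hD
  refine hcomp.trans ?_
  rw [one_pow, mul_one]
  have hfle : (i.factorial : ℝ) ≤ (n.factorial : ℝ) := by exact_mod_cast Nat.factorial_le hi
  have h0 : 0 < ml / t := div_pos hml ht0
  have hfac1 : (1:ℝ) ≤ i.factorial := by exact_mod_cast Nat.one_le_iff_ne_zero.mpr i.factorial_ne_zero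
  have hstep : (i.factorial : ℝ) * (ml / t * n.factorial)
      ≤ (n.factorial : ℝ) * (ml / t * n.factorial) :=
    mul_le_mul_of_nonneg_right hfle (by positivity)
  refine hstep.trans (le_of_eq (by ring))

private lemma bound_DQ (pk x : E) (hx2 : ‖x - pk‖ ≤ 2) :
    ∀ k, 1 ≤ k → ‖iteratedFDeriv ℝ k (fun y : E => ‖y - pk‖ ^ 2) x‖ ≤ 4 ^ k := by
  intro k hk
  match k, hk with
  | 1, _ => calc ‖iteratedFDeriv ℝ 1 (fun y : E => ‖y - pk‖ ^ 2) x‖ ≤ 2 * ‖x - pk‖ :=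
                normsq_D1 pk x
            _ ≤ 4 ^ 1 := by nlinarith
  | 2, _ => calc ‖iteratedFDeriv ℝ 2 (fun y : E => ‖y - pk‖ ^ 2) x‖ ≤ 2 := normsq_D2 pk x
            _ ≤ 4 ^ 2 := by norm_num
  | (m+3), _ =>
    rw [normsq_D3 pk x m]
    positivity

private lemma bound_F2 (n : ℕ) (pk x : E) (hx1 : 1 ≤ ‖x - pk‖) (hx2 : ‖x - pk‖ ≤ 2)
    {U : Set E} (hU : IsOpen U) (hxU : x ∈ U) (hUp : ∀ y ∈ U, 1/2 < ‖y - pk‖)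
    (i : ℕ) (hi : i ≤ n) :
    ‖iteratedFDerivWithin ℝ i (fun y : E => ‖y - pk‖) U x‖
      ≤ (n.factorial : ℝ) * (2 * n.factorial) * 4 ^ n := by
  set Qk : E → ℝ := fun y => ‖y - pk‖ ^ 2 with hQk
  set g2 : ℝ → ℝ := fun s => s ^ ((1:ℝ)/2) with hg2
  have hEq : Set.EqOn (fun y : E => ‖y - pk‖) (g2 ∘ Qk) U := by
    intro y _
    simp only [g2, Qk, Function.comp_apply]
    rw [sq_rpow_half (norm_nonneg _)]
  rw [iteratedFDerivWithin_congr hEq hxU]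
  have hs0 : Qk x = ‖x - pk‖ ^ 2 := rfl
  have hs01 : (1:ℝ) ≤ Qk x := by simp only [Qk]; nlinarith
  have hs0mem : Qk x ∈ Set.Ioi (1/4 : ℝ) := by simp only [Set.mem_Ioi]; linarith
  have hg2cd : ContDiffOn ℝ (n : WithTop ℕ∞) g2 (Set.Ioi (1/4:ℝ)) := fun s hs =>
    (Real.contDiffAt_rpow_const_of_ne (by rw [Set.mem_Ioi] at hs; linarith)).contDiffWithinAt
  have hQkcd : ContDiffOn ℝ (n : WithTop ℕ∞) Qk U := (normsq_contDiff pk).contDiffOn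
  have hmaps : Set.MapsTo Qk U (Set.Ioi (1/4:ℝ)) := by
    intro y hy
    have := hUp y hy
    simp only [Qk, Set.mem_Ioi]
    nlinarith
  have hfac1 : (1:ℝ) ≤ n.factorial := by
    exact_mod_cast Nat.one_le_iff_ne_zero.mpr n.factorial_ne_zero
  have hC : ∀ k, k ≤ i → ‖iteratedFDerivWithin ℝ k g2 (Set.Ioi (1/4:ℝ)) (Qk x)‖
      ≤ 2 * n.factorial := by
    intro k hk
    rw [iteratedFDerivWithin_of_isOpen k isOpen_Ioi hs0mem,
      norm_iteratedFDeriv_eq_norm_iteratedDeriv]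
    match k with
    | 0 =>
      rw [iteratedDeriv_zero]
      simp only [g2, hs0]
      rw [sq_rpow_half (norm_nonneg _), Real.norm_eq_abs, abs_of_nonneg (norm_nonneg _)]
      nlinarith
    | (m+1) =>
      have hshape : g2 = fun s : ℝ => 0 + 1 * s ^ ((1:ℝ)/2) := by funext s; simp [g2]
      rw [hshape, aux_iter_deriv_rpow 0 1 ((1:ℝ)/2) m (Qk x) (by linarith), one_mul,
        Real.norm_eq_abs, abs_mul]
      have hprod : |∏ k ∈ Finset.range (m+1), ((1:ℝ)/2 - k)| ≤ ((m+1).factorial : ℝ) := by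
        apply aux_prod_abs_le_factorial
        intro k
        rw [abs_le]
        constructor <;> push_cast <;> nlinarith [Nat.cast_nonneg (α := ℝ) k]
      have hrp : |(Qk x) ^ ((1:ℝ)/2 - (m+1))| ≤ 2 := by
        rw [abs_of_nonneg (Real.rpow_nonneg (by linarith) _)]
        calc (Qk x) ^ ((1:ℝ)/2 - (m+1)) ≤ (Qk x) ^ ((1:ℝ)/2) := by
              apply Real.rpow_le_rpow_of_exponent_le hs01
              push_cast
              nlinarith [Nat.cast_nonneg (α := ℝ) m]
          _ = ‖x - pk‖ := by rw [hs0, sq_rpow_half (norm_nonneg _)]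
          _ ≤ 2 := hx2
      have hfle : ((m+1).factorial : ℝ) ≤ (n.factorial : ℝ) := by
        exact_mod_cast Nat.factorial_le (hk.trans hi)
      calc |∏ k ∈ Finset.range (m+1), ((1:ℝ)/2 - k)| * |(Qk x) ^ ((1:ℝ)/2 - (m+1))|
          ≤ ((m+1).factorial : ℝ) * 2 := by
            apply mul_le_mul hprod hrp (abs_nonneg _) (by positivity)
        _ ≤ 2 * n.factorial := by nlinarith
  have hD : ∀ k, 1 ≤ k → k ≤ i → ‖iteratedFDerivWithin ℝ k Qk U x‖ ≤ (4:ℝ) ^ k := by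
    intro k h1k _
    rw [iteratedFDerivWithin_of_isOpen k hU hxU]
    exact bound_DQ pk x hx2 k h1k
  have hcomp := norm_iteratedFDerivWithin_comp_le hg2cd hQkcd
    (by exact_mod_cast hi) isOpen_Ioi.uniqueDiffOn hU.uniqueDiffOn hmaps hxU hC hD
  refine hcomp.trans ?_
  have hfle : (i.factorial : ℝ) ≤ (n.factorial : ℝ) := by exact_mod_cast Nat.factorial_le hi
  have hple : (4:ℝ) ^ i ≤ 4 ^ n := pow_le_pow_right₀ (by norm_num) hi
  have h1 : (0:ℝ) < 4 ^ i := by positivity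
  exact mul_le_mul (by nlinarith) hple (le_of_lt h1) (by positivity)


private lemma bound_F3 (n : ℕ) {mk : ℝ} (hmk : 0 < mk) (pk x : E)
    (hx1 : 1 ≤ ‖x - pk‖) (hx2 : ‖x - pk‖ ≤ 2)
    {U : Set E} (hU : IsOpen U) (hxU : x ∈ U) (hUp : ∀ y ∈ U, 1/2 < ‖y - pk‖)
    (i : ℕ) (hi : i ≤ n) :
    ‖iteratedFDerivWithin ℝ i (fun y : E => (mk + 2 * ‖y - pk‖)⁻¹) U x‖
      ≤ (n.factorial : ℝ) * ((n.factorial : ℝ) * n.factorial * (4 * n.factorial) ^ n) * 4 ^ n := by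
  have hfac1 : (1:ℝ) ≤ n.factorial := by
    exact_mod_cast Nat.one_le_iff_ne_zero.mpr n.factorial_ne_zero
  set Qk : E → ℝ := fun y => ‖y - pk‖ ^ 2 with hQk
  set β : ℝ → ℝ := fun s => mk + 2 * s ^ ((1:ℝ)/2) with hβ
  set g3 : ℝ → ℝ := fun s => (mk + 2 * s ^ ((1:ℝ)/2))⁻¹ with hg3
  have hEq : Set.EqOn (fun y : E => (mk + 2 * ‖y - pk‖)⁻¹) (g3 ∘ Qk) U := by
    intro y _
    simp only [g3, Qk, Function.comp_apply]
    rw [sq_rpow_half (norm_nonneg _)]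
  rw [iteratedFDerivWithin_congr hEq hxU]
  have hs01 : (1:ℝ) ≤ Qk x := by simp only [Qk]; nlinarith
  have hs0mem : Qk x ∈ Set.Ioi (1/4 : ℝ) := by simp only [Set.mem_Ioi]; linarith
  have hβs0 : β (Qk x) = mk + 2 * ‖x - pk‖ := by
    simp only [β, Qk]
    rw [sq_rpow_half (norm_nonneg _)]
  have hb2 : 2 ≤ β (Qk x) := by rw [hβs0]; linarith
  have hβcd : ContDiffOn ℝ (n : WithTop ℕ∞) β (Set.Ioi (1/4:ℝ)) := fun s hs =>
    (contDiffAt_const.add (contDiffAt_const.mul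
      (Real.contDiffAt_rpow_const_of_ne (by rw [Set.mem_Ioi] at hs; linarith)))).contDiffWithinAt
  have hinvcd : ContDiffOn ℝ (n : WithTop ℕ∞) Inv.inv (Set.Ioi (0:ℝ)) := fun s hs =>
    (contDiffAt_inv ℝ (by rw [Set.mem_Ioi] at hs; linarith)).contDiffWithinAt
  have hmapsβ : Set.MapsTo β (Set.Ioi (1/4:ℝ)) (Set.Ioi (0:ℝ)) := by
    intro s hs
    rw [Set.mem_Ioi] at hs ⊢
    have h0s : (0:ℝ) < s := by linarith
    have : (0:ℝ) < s ^ ((1:ℝ)/2) := Real.rpow_pos_of_pos h0s _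
    simp only [β]
    nlinarith
  -- bound on the derivatives of g3 = Inv.inv ∘ β on Ioi (1/4) at Q x
  have hCg3 : ∀ k, k ≤ i → ‖iteratedFDerivWithin ℝ k g3 (Set.Ioi (1/4:ℝ)) (Qk x)‖
      ≤ (n.factorial : ℝ) * n.factorial * (4 * n.factorial) ^ n := by
    intro k hk
    have hg3comp : g3 = Inv.inv ∘ β := rfl
    have hCinv : ∀ m, m ≤ k → ‖iteratedFDerivWithin ℝ m Inv.inv (Set.Ioi (0:ℝ)) (β (Qk x))‖
        ≤ (n.factorial : ℝ) := by
      intro m hm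
      rw [iteratedFDerivWithin_of_isOpen m isOpen_Ioi (show β (Qk x) ∈ Set.Ioi (0:ℝ) by
          rw [Set.mem_Ioi]; linarith),
        norm_iteratedFDeriv_eq_norm_iteratedDeriv, iteratedDeriv_eq_iterate, iter_deriv_inv]
      rw [Real.norm_eq_abs, abs_mul]
      have hprod : |(-1) ^ m * (m.factorial : ℝ)| ≤ (m.factorial : ℝ) := by
        rw [abs_mul, abs_pow, abs_neg, abs_one, one_pow, one_mul, Nat.abs_cast]
      have hzp : |(β (Qk x)) ^ (-1 - (m:ℤ))| ≤ 1 := by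
        rw [show (-1 - (m:ℤ)) = -((m+1 : ℕ) : ℤ) by push_cast; ring, zpow_neg, zpow_natCast,
          abs_inv, abs_of_nonneg (by positivity)]
        have h1b : (1:ℝ) ≤ β (Qk x) := by linarith
        exact inv_le_one_of_one_le₀ (one_le_pow₀ h1b)
      have hmn : (m.factorial : ℝ) ≤ (n.factorial : ℝ) := by
        exact_mod_cast Nat.factorial_le ((hm.trans hk).trans hi)
      calc |(-1) ^ m * (m.factorial : ℝ)| * |(β (Qk x)) ^ (-1 - (m:ℤ))|
          ≤ (m.factorial : ℝ) * 1 := mul_le_mul hprod hzp (abs_nonneg _) (by positivity)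
        _ ≤ (n.factorial : ℝ) := by nlinarith
    have hDβ : ∀ m, 1 ≤ m → m ≤ k → ‖iteratedFDerivWithin ℝ m β (Set.Ioi (1/4:ℝ)) (Qk x)‖
        ≤ ((4:ℝ) * n.factorial) ^ m := by
      intro m h1m hmk2
      obtain ⟨m', rfl⟩ : ∃ m', m = m' + 1 := ⟨m - 1, by omega⟩
      rw [iteratedFDerivWithin_of_isOpen (m'+1) isOpen_Ioi hs0mem,
        norm_iteratedFDeriv_eq_norm_iteratedDeriv]
      · rw [show β = fun s : ℝ => mk + 2 * s ^ ((1:ℝ)/2) from rfl,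
          aux_iter_deriv_rpow mk 2 ((1:ℝ)/2) m' (Qk x) (by linarith),
          Real.norm_eq_abs, abs_mul, abs_mul, abs_two]
        have hprod : |∏ j ∈ Finset.range (m'+1), ((1:ℝ)/2 - j)| ≤ ((m'+1).factorial : ℝ) := by
          apply aux_prod_abs_le_factorial
          intro j
          rw [abs_le]
          constructor <;> push_cast <;> nlinarith [Nat.cast_nonneg (α := ℝ) j]
        have hrp : |(Qk x) ^ ((1:ℝ)/2 - (m'+1))| ≤ 2 := by
          rw [abs_of_nonneg (Real.rpow_nonneg (by linarith) _)]
          calc (Qk x) ^ ((1:ℝ)/2 - (m'+1)) ≤ (Qk x) ^ ((1:ℝ)/2) := by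
                apply Real.rpow_le_rpow_of_exponent_le hs01
                push_cast
                nlinarith [Nat.cast_nonneg (α := ℝ) m']
            _ = ‖x - pk‖ := by simp only [Qk]; rw [sq_rpow_half (norm_nonneg _)]
            _ ≤ 2 := hx2
        have hmn : ((m'+1).factorial : ℝ) ≤ (n.factorial : ℝ) := by
          exact_mod_cast Nat.factorial_le (hmk2.trans (hk.trans hi))
        have hbase : (1:ℝ) ≤ 4 * n.factorial := by nlinarith
        have t1 : (2:ℝ) * |∏ j ∈ Finset.range (m'+1), ((1:ℝ)/2 - (j:ℝ))|
            * |(Qk x) ^ ((1:ℝ)/2 - ((m':ℝ)+1))| ≤ 2 * ((m'+1).factorial : ℝ) * 2 :=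
          mul_le_mul (mul_le_mul_of_nonneg_left hprod (by norm_num)) hrp (abs_nonneg _)
            (by positivity)
        refine t1.trans ?_
        calc (2:ℝ) * ((m'+1).factorial : ℝ) * 2 ≤ 4 * (n.factorial : ℝ) := by nlinarith
          _ ≤ ((4:ℝ) * n.factorial) ^ (m'+1) := le_self_pow₀ hbase (Nat.succ_ne_zero m')
    rw [hg3comp]
    have hcomp := norm_iteratedFDerivWithin_comp_le hinvcd hβcd
      (show (k : WithTop ℕ∞) ≤ (n : WithTop ℕ∞) by exact_mod_cast hk.trans hi)
      isOpen_Ioi.uniqueDiffOn isOpen_Ioi.uniqueDiffOn hmapsβ hs0mem hCinv hDβ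
    refine hcomp.trans ?_
    have hkn : (k.factorial : ℝ) ≤ (n.factorial : ℝ) := by
      exact_mod_cast Nat.factorial_le (hk.trans hi)
    have hpow : ((4:ℝ) * n.factorial) ^ k ≤ ((4:ℝ) * n.factorial) ^ n :=
      pow_le_pow_right₀ (by nlinarith) (hk.trans hi)
    have h4n : (0:ℝ) < (4 * (n.factorial:ℝ)) ^ k := by positivity
    exact mul_le_mul (by nlinarith) hpow (le_of_lt h4n) (by positivity)
  -- outer composition
  have hg3cd : ContDiffOn ℝ (n : WithTop ℕ∞) g3 (Set.Ioi (1/4:ℝ)) := by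
    intro s hs
    rw [Set.mem_Ioi] at hs
    have h0s : (0:ℝ) < s := by linarith
    have hpos : (0:ℝ) < mk + 2 * s ^ ((1:ℝ)/2) := by
      have : (0:ℝ) < s ^ ((1:ℝ)/2) := Real.rpow_pos_of_pos h0s _
      nlinarith
    exact ((contDiffAt_const.add (contDiffAt_const.mul
      (Real.contDiffAt_rpow_const_of_ne (ne_of_gt h0s)))).inv (ne_of_gt hpos)).contDiffWithinAt
  have hQkcd : ContDiffOn ℝ (n : WithTop ℕ∞) Qk U := (normsq_contDiff pk).contDiffOn
  have hmaps : Set.MapsTo Qk U (Set.Ioi (1/4:ℝ)) := by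
    intro y hy
    have := hUp y hy
    simp only [Qk, Set.mem_Ioi]
    nlinarith
  have hD : ∀ k, 1 ≤ k → k ≤ i → ‖iteratedFDerivWithin ℝ k Qk U x‖ ≤ (4:ℝ) ^ k := by
    intro k h1k _
    rw [iteratedFDerivWithin_of_isOpen k hU hxU]
    exact bound_DQ pk x hx2 k h1k
  have hcomp := norm_iteratedFDerivWithin_comp_le hg3cd hQkcd
    (by exact_mod_cast hi) isOpen_Ioi.uniqueDiffOn hU.uniqueDiffOn hmaps hxU hCg3 hD
  refine hcomp.trans ?_
  have hfle : (i.factorial : ℝ) ≤ (n.factorial : ℝ) := by exact_mod_cast Nat.factorial_le hi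
  have hple : (4:ℝ) ^ i ≤ 4 ^ n := pow_le_pow_right₀ (by norm_num) hi
  apply mul_le_mul (by apply mul_le_mul_of_nonneg_right hfle (by positivity)) hple
    (by positivity) (by positivity)

end

/-- Derivative bounds for
`Θ(x) = (m_ℓ/‖x − p_ℓ‖) · (‖x − p_k‖/(m_k + 2‖x − p_k‖))` on the annulus
`1 ≤ ‖x − p_k‖ ≤ 2`: for every `j ≤ n`,
`‖iteratedFDeriv ℝ j Θ x‖ ≤ C · m_ℓ / ‖p_k − p_ℓ‖`. -/
theorem theta_interaction_derivative_bounds (n : ℕ) :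
    ∃ C > (0 : ℝ), ∀ (mk ml : ℝ), 0 < mk → 0 < ml →
      ∀ pk pl : EuclideanSpace ℝ (Fin 3), (5 : ℝ) ≤ ‖pk - pl‖ →
      ∀ x : EuclideanSpace ℝ (Fin 3), 1 ≤ ‖x - pk‖ → ‖x - pk‖ ≤ 2 →
      ∀ j ≤ n,
        ‖iteratedFDeriv ℝ j
            (fun y => (ml / ‖y - pl‖) * (‖y - pk‖ / (mk + 2 * ‖y - pk‖))) x‖
          ≤ C * ml / ‖pk - pl‖ := by
  have hfacpos : (0:ℝ) < n.factorial := by exact_mod_cast n.factorial_pos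
  set c1 : ℝ := 2 * n.factorial * n.factorial with hc1
  set c2 : ℝ := (n.factorial : ℝ) * (2 * n.factorial) * 4 ^ n with hc2
  set c3 : ℝ := (n.factorial : ℝ) * ((n.factorial : ℝ) * n.factorial * (4 * n.factorial) ^ n) * 4 ^ n with hc3
  set cB : ℝ := 2 ^ n * (c2 * c3) with hcB
  have hc1pos : 0 < c1 := by positivity
  have hc2pos : 0 < c2 := by positivity
  have hc3pos : 0 < c3 := by positivity
  have hcBpos : 0 < cB := by positivity
  refine ⟨2 ^ n * (c1 * cB), by positivity, ?_⟩
  intro mk ml hmk hml pk pl hR x hx1 hx2 j hj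
  have hRpos : (0:ℝ) < ‖pk - pl‖ := by linarith
  have htR : ‖pk - pl‖ - 2 ≤ ‖x - pl‖ := by
    have htri : ‖pk - pl‖ ≤ ‖pk - x‖ + ‖x - pl‖ := by
      have := dist_triangle pk x pl
      simpa [dist_eq_norm] using this
    have hrev : ‖pk - x‖ = ‖x - pk‖ := norm_sub_rev pk x
    linarith
  have ht3 : 3 ≤ ‖x - pl‖ := by linarith
  have ht35 : 3/5 * ‖pk - pl‖ ≤ ‖x - pl‖ := by linarith
  set U : Set (EuclideanSpace ℝ (Fin 3)) :=
    {y | ‖x - pl‖/2 < ‖y - pl‖} ∩ {y | 1/2 < ‖y - pk‖} with hU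
  have hUopen : IsOpen U := by
    apply IsOpen.inter
    · exact isOpen_lt continuous_const ((continuous_id.sub continuous_const).norm)
    · exact isOpen_lt continuous_const ((continuous_id.sub continuous_const).norm)
  have hxU : x ∈ U := by
    constructor
    · show ‖x - pl‖/2 < ‖x - pl‖
      linarith
    · show 1/2 < ‖x - pk‖
      linarith
  have hUp1 : ∀ y ∈ U, ‖x - pl‖/2 < ‖y - pl‖ := fun y hy => hy.1
  have hUp2 : ∀ y ∈ U, 1/2 < ‖y - pk‖ := fun y hy => hy.2
  rw [← iteratedFDerivWithin_of_isOpen j hUopen hxU]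
  have hfun : (fun y : EuclideanSpace ℝ (Fin 3) =>
        (ml / ‖y - pl‖) * (‖y - pk‖ / (mk + 2 * ‖y - pk‖)))
      = fun y : EuclideanSpace ℝ (Fin 3) =>
        (ml * ‖y - pl‖⁻¹) * (‖y - pk‖ * (mk + 2 * ‖y - pk‖)⁻¹) := by
    funext y
    rw [div_eq_mul_inv, div_eq_mul_inv]
  rw [hfun]
  -- smoothness of the pieces on U
  have cdA : ContDiffOn ℝ (n : WithTop ℕ∞) (fun y : EuclideanSpace ℝ (Fin 3) =>
      ml * ‖y - pl‖⁻¹) U := by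
    intro y hy
    have h0 : (0:ℝ) < ‖y - pl‖ := lt_trans (by linarith) (hUp1 y hy)
    have hne : y - pl ≠ 0 := by
      intro h
      rw [h] at h0
      simp at h0
    exact (contDiffAt_const.mul
      (((contDiffAt_id.sub contDiffAt_const).norm ℝ hne).inv (ne_of_gt h0))).contDiffWithinAt
  have cdF2 : ContDiffOn ℝ (n : WithTop ℕ∞) (fun y : EuclideanSpace ℝ (Fin 3) =>
      ‖y - pk‖) U := by
    intro y hy
    have h0 : (0:ℝ) < ‖y - pk‖ := lt_trans (by norm_num) (hUp2 y hy)
    have hne : y - pk ≠ 0 := by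
      intro h
      rw [h] at h0
      simp at h0
    exact ((contDiffAt_id.sub contDiffAt_const).norm ℝ hne).contDiffWithinAt
  have cdF3 : ContDiffOn ℝ (n : WithTop ℕ∞) (fun y : EuclideanSpace ℝ (Fin 3) =>
      (mk + 2 * ‖y - pk‖)⁻¹) U := by
    intro y hy
    have h0 : (0:ℝ) < ‖y - pk‖ := lt_trans (by norm_num) (hUp2 y hy)
    have hne : y - pk ≠ 0 := by
      intro h
      rw [h] at h0
      simp at h0
    have hpos : (0:ℝ) < mk + 2 * ‖y - pk‖ := by nlinarith
    exact ((contDiffAt_const.add (contDiffAt_const.mul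
      ((contDiffAt_id.sub contDiffAt_const).norm ℝ hne))).inv (ne_of_gt hpos)).contDiffWithinAt
  have cdB : ContDiffOn ℝ (n : WithTop ℕ∞) (fun y : EuclideanSpace ℝ (Fin 3) =>
      ‖y - pk‖ * (mk + 2 * ‖y - pk‖)⁻¹) U := cdF2.mul cdF3
  -- bound on factor A
  have hA : ∀ i, i ≤ j → ‖iteratedFDerivWithin ℝ i (fun y : EuclideanSpace ℝ (Fin 3) =>
      ml * ‖y - pl‖⁻¹) U x‖ ≤ c1 * ml / ‖pk - pl‖ := by
    intro i hi
    refine (bound_A n hml pl x ht3 hUopen hxU hUp1 i (hi.trans hj)).trans ?_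
    have h1 : ml / ‖x - pl‖ ≤ ml / (3/5 * ‖pk - pl‖) :=
      div_le_div_of_nonneg_left (le_of_lt hml) (by linarith) ht35
    have h2 : ml / (3/5 * ‖pk - pl‖) = 5/3 * (ml / ‖pk - pl‖) := by
      field_simp
    have h3 : ml / ‖x - pl‖ ≤ 2 * (ml / ‖pk - pl‖) := by
      rw [h2] at h1
      have : (0:ℝ) ≤ ml / ‖pk - pl‖ := by positivity
      linarith
    calc (n.factorial : ℝ) * n.factorial * (ml / ‖x - pl‖)
        ≤ (n.factorial : ℝ) * n.factorial * (2 * (ml / ‖pk - pl‖)) := by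
          apply mul_le_mul_of_nonneg_left h3 (by positivity)
      _ = c1 * ml / ‖pk - pl‖ := by
          rw [hc1]
          ring
  -- bound on factor B
  have hB : ∀ i, i ≤ j → ‖iteratedFDerivWithin ℝ i (fun y : EuclideanSpace ℝ (Fin 3) =>
      ‖y - pk‖ * (mk + 2 * ‖y - pk‖)⁻¹) U x‖ ≤ cB := by
    intro i hi
    have hmul := norm_iteratedFDerivWithin_mul_le cdF2 cdF3 hUopen.uniqueDiffOn hxU
      (show (i : WithTop ℕ∞) ≤ (n : WithTop ℕ∞) by exact_mod_cast hi.trans hj)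
    refine hmul.trans ?_
    have hterm : ∀ a ∈ Finset.range (i+1),
        (i.choose a : ℝ) * ‖iteratedFDerivWithin ℝ a (fun y : EuclideanSpace ℝ (Fin 3) =>
          ‖y - pk‖) U x‖ * ‖iteratedFDerivWithin ℝ (i - a) (fun y : EuclideanSpace ℝ (Fin 3) =>
          (mk + 2 * ‖y - pk‖)⁻¹) U x‖ ≤ (i.choose a : ℝ) * (c2 * c3) := by
      intro a ha
      rw [Finset.mem_range] at ha
      have h2 := bound_F2 n pk x hx1 hx2 hUopen hxU hUp2 a (by omega)
      have h3 := bound_F3 n hmk pk x hx1 hx2 hUopen hxU hUp2 (i - a) (by omega)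
      have hch : (0:ℝ) ≤ (i.choose a : ℝ) := by positivity
      calc (i.choose a : ℝ) * ‖iteratedFDerivWithin ℝ a (fun y : EuclideanSpace ℝ (Fin 3) =>
            ‖y - pk‖) U x‖ * ‖iteratedFDerivWithin ℝ (i - a)
            (fun y : EuclideanSpace ℝ (Fin 3) => (mk + 2 * ‖y - pk‖)⁻¹) U x‖
          ≤ (i.choose a : ℝ) * c2 * c3 := by
            apply mul_le_mul (mul_le_mul_of_nonneg_left h2 hch) h3 (norm_nonneg _) (by positivity)
        _ = (i.choose a : ℝ) * (c2 * c3) := by ring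
    refine (Finset.sum_le_sum hterm).trans ?_
    rw [← Finset.sum_mul]
    have hsum : ∑ a ∈ Finset.range (i+1), (i.choose a : ℝ) = 2 ^ i := by
      rw [← Nat.cast_sum, Nat.sum_range_choose]
      push_cast
      rfl
    rw [hsum, hcB]
    have hpow : (2:ℝ) ^ i ≤ 2 ^ n := pow_le_pow_right₀ (by norm_num) (hi.trans hj)
    apply mul_le_mul_of_nonneg_right hpow (by positivity)
  -- assemble
  have hmul := norm_iteratedFDerivWithin_mul_le cdA cdB hUopen.uniqueDiffOn hxU
    (show (j : WithTop ℕ∞) ≤ (n : WithTop ℕ∞) by exact_mod_cast hj)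
  refine hmul.trans ?_
  have hterm : ∀ a ∈ Finset.range (j+1),
      (j.choose a : ℝ) * ‖iteratedFDerivWithin ℝ a (fun y : EuclideanSpace ℝ (Fin 3) =>
        ml * ‖y - pl‖⁻¹) U x‖ * ‖iteratedFDerivWithin ℝ (j - a)
        (fun y : EuclideanSpace ℝ (Fin 3) => ‖y - pk‖ * (mk + 2 * ‖y - pk‖)⁻¹) U x‖
      ≤ (j.choose a : ℝ) * (c1 * ml / ‖pk - pl‖ * cB) := by
    intro a ha
    rw [Finset.mem_range] at ha
    have h2 := hA a (by omega)
    have h3 := hB (j - a) (by omega)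
    have hch : (0:ℝ) ≤ (j.choose a : ℝ) := by positivity
    calc (j.choose a : ℝ) * ‖iteratedFDerivWithin ℝ a (fun y : EuclideanSpace ℝ (Fin 3) =>
          ml * ‖y - pl‖⁻¹) U x‖ * ‖iteratedFDerivWithin ℝ (j - a)
          (fun y : EuclideanSpace ℝ (Fin 3) => ‖y - pk‖ * (mk + 2 * ‖y - pk‖)⁻¹) U x‖
        ≤ (j.choose a : ℝ) * (c1 * ml / ‖pk - pl‖) * cB := by
          apply mul_le_mul (mul_le_mul_of_nonneg_left h2 hch) h3 (norm_nonneg _) (by positivity)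
      _ = (j.choose a : ℝ) * (c1 * ml / ‖pk - pl‖ * cB) := by ring
  refine (Finset.sum_le_sum hterm).trans ?_
  rw [← Finset.sum_mul]
  have hsum : ∑ a ∈ Finset.range (j+1), (j.choose a : ℝ) = 2 ^ j := by
    rw [← Nat.cast_sum, Nat.sum_range_choose]
    push_cast
    rfl
  rw [hsum]
  have hpow : (2:ℝ) ^ j ≤ 2 ^ n := pow_le_pow_right₀ (by norm_num) hj
  have hfin : (0:ℝ) ≤ c1 * ml / ‖pk - pl‖ * cB := by positivity
  calc (2:ℝ) ^ j * (c1 * ml / ‖pk - pl‖ * cB)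
      ≤ (2:ℝ) ^ n * (c1 * ml / ‖pk - pl‖ * cB) := mul_le_mul_of_nonneg_right hpow hfin
    _ = 2 ^ n * (c1 * cB) * ml / ‖pk - pl‖ := by ring
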